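/- Safety of the screening rule: suppose (β̄, ᾱ) ∈ ℝ^p × ℝ^n is a saddle point of L. Let α ∈ ℝ^n, β ∈ ℝ^p and set r = √(2(P(β) − D(α))). If an index j satisfies |⟨x_j, α⟩| + ‖x_j‖·r < 2√(λ₀λ₂) + λ₁, then β̄_j = 0. -/

import Mathlib

noncomputable section

/-- ℓ₀ "norm": number of nonzero entries, as a real number. -/
def zeroNorm {p : ℕ} (β : EuclideanSpace ℝ (Fin p)) : ℝ :=
  ((Finset.univ.filter fun j => β j ≠ 0).card : ℝ)

/-- ℓ₁ norm. -/
def oneNorm {p : ℕ} (β : EuclideanSpace ℝ (Fin p)) : ℝ := ∑ j, |β j|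

/-- `X β`, where `x j` is the `j`-th column of `X`. -/
def Xmul {n p : ℕ} (x : Fin p → EuclideanSpace ℝ (Fin n))
    (β : EuclideanSpace ℝ (Fin p)) : EuclideanSpace ℝ (Fin n) :=
  ∑ j, β j • x j

/-- Primal objective `P(β)`. -/
def Pobj {n p : ℕ} (x : Fin p → EuclideanSpace ℝ (Fin n)) (y : EuclideanSpace ℝ (Fin n))
    (l0 l1 l2 : ℝ) (β : EuclideanSpace ℝ (Fin p)) : ℝ :=
  (1/2) * ‖y - Xmul x β‖^2 + l0 * zeroNorm β + l1 * oneNorm β + l2 * ‖β‖^2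

/-- Lagrangian `L(β, α)`. -/
def Lag {n p : ℕ} (x : Fin p → EuclideanSpace ℝ (Fin n)) (y : EuclideanSpace ℝ (Fin n))
    (l0 l1 l2 : ℝ) (β : EuclideanSpace ℝ (Fin p)) (α : EuclideanSpace ℝ (Fin n)) : ℝ :=
  (inner ℝ α (Xmul x β) : ℝ) - (1/2) * ‖α‖^2 - (inner ℝ y α : ℝ)
    + l0 * zeroNorm β + l1 * oneNorm β + l2 * ‖β‖^2

/-- `η_j(α) = −⟨x_j, α⟩ / (2 λ₂)`. -/
def etav {n p : ℕ} (x : Fin p → EuclideanSpace ℝ (Fin n)) (l2 : ℝ)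
    (α : EuclideanSpace ℝ (Fin n)) (j : Fin p) : ℝ :=
  -(inner ℝ (x j) α : ℝ) / (2 * l2)

/-- Threshold `η₀ = (2√(λ₀λ₂) + λ₁)/(2λ₂)`. -/
def eta0 (l0 l1 l2 : ℝ) : ℝ := (2 * Real.sqrt (l0 * l2) + l1) / (2 * l2)

/-- Scalar function `ψ` appearing in the dual objective. -/
def psi (l0 l1 l2 : ℝ) (t : ℝ) : ℝ :=
  if eta0 l0 l1 l2 ≤ |t| then -l2 * (|t| - l1 / (2 * l2))^2 + l0 else 0

/-- Dual objective `D(α)` for the square loss. -/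
def Dobj {n p : ℕ} (x : Fin p → EuclideanSpace ℝ (Fin n)) (y : EuclideanSpace ℝ (Fin n))
    (l0 l1 l2 : ℝ) (α : EuclideanSpace ℝ (Fin n)) : ℝ :=
  -(1/2) * ‖α‖^2 - (inner ℝ y α : ℝ) + ∑ j : Fin p, psi l0 l1 l2 (etav x l2 α j)

/-- Thresholding map `𝔅`. -/
def Bth (l0 l1 l2 : ℝ) (t : ℝ) : ℝ :=
  if eta0 l0 l1 l2 ≤ |t| then Real.sign t * (|t| - l1 / (2 * l2)) else 0

/-- Primal-dual link `β(α)` with entries `β_j(α) = 𝔅(η_j(α))`. -/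
def betaOf {n p : ℕ} (x : Fin p → EuclideanSpace ℝ (Fin n)) (l0 l1 l2 : ℝ)
    (α : EuclideanSpace ℝ (Fin n)) : EuclideanSpace ℝ (Fin p) :=
  WithLp.toLp 2 (fun j => Bth l0 l1 l2 (etav x l2 α j))

/-- `(β̄, ᾱ)` is a saddle point of the Lagrangian `L`. -/
def IsSaddle {n p : ℕ} (x : Fin p → EuclideanSpace ℝ (Fin n)) (y : EuclideanSpace ℝ (Fin n))
    (l0 l1 l2 : ℝ) (βb : EuclideanSpace ℝ (Fin p)) (αb : EuclideanSpace ℝ (Fin n)) : Prop :=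
  (∀ α, Lag x y l0 l1 l2 βb α ≤ Lag x y l0 l1 l2 βb αb) ∧
  (∀ β, Lag x y l0 l1 l2 βb αb ≤ Lag x y l0 l1 l2 β αb)


set_option maxHeartbeats 1000000 in
lemma psi_le (l0 l1 l2 : ℝ) (hl0 : 0 < l0) (hl1 : 0 ≤ l1) (hl2 : 0 < l2) (c b : ℝ) :
    psi l0 l1 l2 (-c/(2*l2)) ≤
      c * b + l0 * (if b ≠ 0 then 1 else 0) + l1 * |b| + l2 * b^2 := by
  have hs : Real.sqrt (l0 * l2) ^ 2 = l0 * l2 := Real.sq_sqrt (by positivity)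
  have hs0 : 0 ≤ Real.sqrt (l0 * l2) := Real.sqrt_nonneg _
  set s := Real.sqrt (l0 * l2) with hsdef
  have habs : |-c/(2*l2)| = |c| / (2*l2) := by
    rw [abs_div, abs_neg]
    congr 1
    exact abs_of_pos (by positivity)
  have hcb : -(|c| * |b|) ≤ c * b := by
    rw [← abs_mul]; exact neg_abs_le _
  have hb0 : 0 ≤ |b| := abs_nonneg b
  have hc0 : 0 ≤ |c| := abs_nonneg c
  have hbb : b^2 = |b|^2 := (sq_abs b).symm
  set u := |b| with hudef
  set a := |c| with hadef
  clear_value s u a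
  have hdeq : a/(2*l2) - l1/(2*l2) = (a - l1)/(2*l2) := by ring
  have hsq : l2 * ((a - l1)/(2*l2))^2 = (a - l1)^2/(4*l2) := by
    field_simp; ring
  unfold psi eta0
  rw [habs, hdeq, hbb]
  by_cases hb : b = 0
  · rw [if_neg (not_not_intro hb)]
    rw [mul_zero, add_zero]
    split_ifs with h
    · have h2 : 2*s + l1 ≤ a := by
        have := (div_le_div_iff₀ (show (0:ℝ) < 2*l2 by positivity)
          (show (0:ℝ) < 2*l2 by positivity)).mp h
        nlinarith
      have h3 : 4*(l0*l2) ≤ (a - l1)^2 := by nlinarith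
      have h4 : l0 ≤ (a - l1)^2/(4*l2) := by
        rw [le_div_iff₀ (by positivity)]; nlinarith
      simp only [hb, abs_zero]
      nlinarith
    · simp only [hb, abs_zero]
      have := mul_nonneg hl1 hb0
      nlinarith [mul_nonneg hl2.le (sq_nonneg u)]
  · rw [if_pos hb, mul_one]
    split_ifs with h
    · have key : 0 ≤ (2*l2*u - (a - l1))^2/(4*l2) := by positivity
      have expand : (2*l2*u - (a - l1))^2/(4*l2)
          = l2*u^2 - (a - l1)*u + (a - l1)^2/(4*l2) := by
        field_simp; ring
      rw [neg_mul, hsq]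
      nlinarith [key, expand, hcb]
    · push_neg at h
      have h2 : a < 2*s + l1 := by
        have := (div_lt_div_iff₀ (show (0:ℝ) < 2*l2 by positivity)
          (show (0:ℝ) < 2*l2 by positivity)).mp h
        nlinarith
      have key2 : 0 ≤ l2*u^2 - 2*s*u + l0 := by
        have h' : 0 ≤ (l2*u - s)^2 / l2 := by positivity
        have e : (l2*u - s)^2 / l2 = l2*u^2 - 2*s*u + s^2/l2 := by field_simp; ring
        have e2 : s^2/l2 = l0 := by rw [hs]; field_simp
        rw [e, e2] at h'
        exact h'
      linarith [hcb, key2, mul_le_mul_of_nonneg_right h2.le hb0]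

lemma inner_Xmul {n p : ℕ} (x : Fin p → EuclideanSpace ℝ (Fin n))
    (β : EuclideanSpace ℝ (Fin p)) (α : EuclideanSpace ℝ (Fin n)) :
    (inner ℝ α (Xmul x β) : ℝ) = ∑ j, (inner ℝ (x j) α : ℝ) * β j := by
  unfold Xmul
  rw [inner_sum]
  refine Finset.sum_congr rfl fun j _ => ?_
  rw [real_inner_smul_right, real_inner_comm]
  ring

lemma norm_sq_sum {p : ℕ} (β : EuclideanSpace ℝ (Fin p)) : ‖β‖^2 = ∑ j, (β j)^2 := by
  rw [EuclideanSpace.norm_eq, Real.sq_sqrt (by positivity)]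
  simp [sq_abs]

lemma zeroNorm_sum {p : ℕ} (β : EuclideanSpace ℝ (Fin p)) :
    zeroNorm β = ∑ j, (if β j ≠ 0 then (1:ℝ) else 0) := by
  unfold zeroNorm
  rw [Finset.card_filter]
  push_cast
  rfl

lemma Lag_eq {n p : ℕ} (x : Fin p → EuclideanSpace ℝ (Fin n)) (y : EuclideanSpace ℝ (Fin n))
    (l0 l1 l2 : ℝ) (β : EuclideanSpace ℝ (Fin p)) (α : EuclideanSpace ℝ (Fin n)) :
    Lag x y l0 l1 l2 β α =
      (∑ j, ((inner ℝ (x j) α : ℝ) * β j + l0 * (if β j ≠ 0 then 1 else 0)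
        + l1 * |β j| + l2 * (β j)^2)) - (1/2) * ‖α‖^2 - (inner ℝ y α : ℝ) := by
  have expand : ∀ (A B C D : Fin p → ℝ), ∑ j, (A j + B j + C j + D j)
      = (∑ j, A j) + (∑ j, B j) + (∑ j, C j) + (∑ j, D j) := by
    intros; simp [Finset.sum_add_distrib]
  unfold Lag oneNorm
  rw [inner_Xmul, zeroNorm_sum, norm_sq_sum β, expand, Finset.mul_sum, Finset.mul_sum,
    Finset.mul_sum]
  ring

lemma Lag_le_Pobj {n p : ℕ} (x : Fin p → EuclideanSpace ℝ (Fin n)) (y : EuclideanSpace ℝ (Fin n))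
    (l0 l1 l2 : ℝ) (β : EuclideanSpace ℝ (Fin p)) (α : EuclideanSpace ℝ (Fin n)) :
    Lag x y l0 l1 l2 β α ≤ Pobj x y l0 l1 l2 β := by
  unfold Lag Pobj
  have h := norm_add_sq_real (y - Xmul x β) α
  have h2 : (inner ℝ (y - Xmul x β) α : ℝ) = (inner ℝ y α : ℝ) - (inner ℝ α (Xmul x β) : ℝ) := by
    rw [inner_sub_left, real_inner_comm (Xmul x β) α]
  nlinarith [sq_nonneg ‖y - Xmul x β + α‖]

lemma Dobj_le_Lag {n p : ℕ} (x : Fin p → EuclideanSpace ℝ (Fin n)) (y : EuclideanSpace ℝ (Fin n))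
    (l0 l1 l2 : ℝ) (hl0 : 0 < l0) (hl1 : 0 ≤ l1) (hl2 : 0 < l2)
    (β : EuclideanSpace ℝ (Fin p)) (α : EuclideanSpace ℝ (Fin n)) :
    Dobj x y l0 l1 l2 α ≤ Lag x y l0 l1 l2 β α := by
  rw [Lag_eq]
  unfold Dobj
  have hsum : ∑ j, psi l0 l1 l2 (etav x l2 α j) ≤
      ∑ j, ((inner ℝ (x j) α : ℝ) * β j + l0 * (if β j ≠ 0 then 1 else 0)
        + l1 * |β j| + l2 * (β j)^2) := by
    refine Finset.sum_le_sum fun j _ => ?_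
    have h := psi_le l0 l1 l2 hl0 hl1 hl2 ((inner ℝ (x j) α : ℝ)) (β j)
    unfold etav
    exact h
  linarith

/-- safety of the screening rule. -/
theorem stmt13 (n p : ℕ) (x : Fin p → EuclideanSpace ℝ (Fin n))
    (y : EuclideanSpace ℝ (Fin n)) (l0 l1 l2 : ℝ)
    (hl0 : 0 < l0) (hl1 : 0 ≤ l1) (hl2 : 0 < l2)
    (βb : EuclideanSpace ℝ (Fin p)) (αb : EuclideanSpace ℝ (Fin n))
    (hsad : IsSaddle x y l0 l1 l2 βb αb)
    (α : EuclideanSpace ℝ (Fin n)) (β : EuclideanSpace ℝ (Fin p))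
    (r : ℝ) (hr : r = Real.sqrt (2 * (Pobj x y l0 l1 l2 β - Dobj x y l0 l1 l2 α)))
    (j : Fin p)
    (hscr : |(inner ℝ (x j) α : ℝ)| + ‖x j‖ * r < 2 * Real.sqrt (l0 * l2) + l1) :
    βb j = 0 := by
  have hs : Real.sqrt (l0 * l2) ^ 2 = l0 * l2 := Real.sq_sqrt (by positivity)
  have hs0 : 0 ≤ Real.sqrt (l0 * l2) := Real.sqrt_nonneg _
  -- Step 1: αb = Xmul x βb - y
  have haz : αb = Xmul x βb - y := by
    have h1 := hsad.1 (Xmul x βb - y)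
    unfold Lag at h1
    have e1 : (inner ℝ (Xmul x βb - y) (Xmul x βb) : ℝ) - (inner ℝ y (Xmul x βb - y) : ℝ)
        = ‖Xmul x βb - y‖^2 := by
      rw [real_inner_comm (Xmul x βb - y) y, ← inner_sub_right,
        real_inner_self_eq_norm_sq]
    have e2 : (inner ℝ αb (Xmul x βb) : ℝ) - (inner ℝ y αb : ℝ)
        = (inner ℝ αb (Xmul x βb - y) : ℝ) := by
      rw [real_inner_comm αb y, ← inner_sub_right]
    have e3 := norm_sub_sq_real αb (Xmul x βb - y)
    have hzero : ‖αb - (Xmul x βb - y)‖^2 ≤ 0 := by linarith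
    have hz2 : ‖αb - (Xmul x βb - y)‖ = 0 := by
      have hnn := sq_nonneg ‖αb - (Xmul x βb - y)‖
      have h0 : ‖αb - (Xmul x βb - y)‖^2 = 0 := le_antisymm hzero hnn
      exact pow_eq_zero_iff two_ne_zero |>.mp h0
    exact sub_eq_zero.mp (norm_eq_zero.mp hz2)
  -- Step 2: quadratic identity in α
  have hquad : ∀ α' : EuclideanSpace ℝ (Fin n),
      Lag x y l0 l1 l2 βb α' = Lag x y l0 l1 l2 βb αb - (1/2) * ‖α' - αb‖^2 := by
    intro α'
    unfold Lag
    have e1 : (inner ℝ αb (Xmul x βb) : ℝ) - (inner ℝ y αb : ℝ) = ‖αb‖^2 := by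
      rw [real_inner_comm αb y, ← inner_sub_right, ← haz, real_inner_self_eq_norm_sq]
    have e2 : (inner ℝ α' (Xmul x βb) : ℝ) - (inner ℝ y α' : ℝ) = (inner ℝ α' αb : ℝ) := by
      rw [real_inner_comm α' y, ← inner_sub_right, ← haz]
    have e3 := norm_sub_sq_real α' αb
    linarith
  -- Step 3: duality gap bounds ‖α - αb‖
  have hgap : (1/2) * ‖α - αb‖^2 ≤ Pobj x y l0 l1 l2 β - Dobj x y l0 l1 l2 α := by
    have hD := Dobj_le_Lag x y l0 l1 l2 hl0 hl1 hl2 βb α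
    have hq := hquad α
    have h2 := hsad.2 β
    have hP := Lag_le_Pobj x y l0 l1 l2 β αb
    linarith
  have hle : ‖α - αb‖ ≤ r := by
    rw [hr]
    have h1 : ‖α - αb‖^2 ≤ 2 * (Pobj x y l0 l1 l2 β - Dobj x y l0 l1 l2 α) := by linarith
    calc ‖α - αb‖ = Real.sqrt (‖α - αb‖^2) := (Real.sqrt_sq (norm_nonneg _)).symm
      _ ≤ _ := Real.sqrt_le_sqrt h1
  -- Step 5: coordinate optimality
  by_contra hne
  have h2 := hsad.2 (WithLp.toLp 2 (Function.update βb j 0))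
  rw [Lag_eq, Lag_eq] at h2
  have hsplit : ∀ γ : EuclideanSpace ℝ (Fin p),
      (∑ k, ((inner ℝ (x k) αb : ℝ) * γ k + l0 * (if γ k ≠ 0 then 1 else 0)
        + l1 * |γ k| + l2 * (γ k)^2))
      = ((inner ℝ (x j) αb : ℝ) * γ j + l0 * (if γ j ≠ 0 then 1 else 0)
        + l1 * |γ j| + l2 * (γ j)^2)
        + ∑ k ∈ Finset.univ.erase j, ((inner ℝ (x k) αb : ℝ) * γ k
          + l0 * (if γ k ≠ 0 then 1 else 0) + l1 * |γ k| + l2 * (γ k)^2) := by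
    intro γ
    exact (Finset.add_sum_erase _ _ (Finset.mem_univ j)).symm
  rw [hsplit βb, hsplit (WithLp.toLp 2 (Function.update βb j 0))] at h2
  simp only [WithLp.ofLp_toLp, PiLp.toLp_apply] at h2
  have herase : ∑ k ∈ Finset.univ.erase j,
      ((inner ℝ (x k) αb : ℝ) * (Function.update βb j 0 k)
        + l0 * (if Function.update βb j 0 k ≠ 0 then 1 else 0)
        + l1 * |Function.update βb j 0 k| + l2 * (Function.update βb j 0 k)^2)
      = ∑ k ∈ Finset.univ.erase j, ((inner ℝ (x k) αb : ℝ) * βb k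
        + l0 * (if βb k ≠ 0 then 1 else 0) + l1 * |βb k| + l2 * (βb k)^2) := by
    refine Finset.sum_congr rfl fun k hk => ?_
    rw [Function.update_of_ne (Finset.ne_of_mem_erase hk)]
  rw [herase] at h2
  simp only [Function.update_self] at h2
  have hopt : (inner ℝ (x j) αb : ℝ) * βb j + l0 + l1 * |βb j| + l2 * (βb j)^2 ≤ 0 := by
    rw [if_pos hne] at h2
    norm_num [-PiLp.inner_apply] at h2
    linarith
  -- Step 6: |⟨x_j, αb⟩| ≥ 2√(l0 l2) + l1
  set s := Real.sqrt (l0 * l2) with hsdef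
  have hub : 2*s + l1 ≤ |(inner ℝ (x j) αb : ℝ)| := by
    set cb := (inner ℝ (x j) αb : ℝ) with hcbdef
    have hu : 0 < |βb j| := abs_pos.mpr hne
    have hcb : -(|cb| * |βb j|) ≤ cb * βb j := by
      rw [← abs_mul]; exact neg_abs_le _
    have hbb : (βb j)^2 = |βb j|^2 := (sq_abs _).symm
    have key2 : 0 ≤ l2*(βb j)^2 - 2*s*|βb j| + l0 := by
      have h' : 0 ≤ (l2*|βb j| - s)^2 / l2 := by positivity
      have e : (l2*|βb j| - s)^2 = l2^2*(βb j)^2 - 2*l2*s*|βb j| + s^2 := by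
        rw [sub_sq, mul_pow, sq_abs]; ring
      have e2 : (l2*|βb j| - s)^2 / l2 = l2*(βb j)^2 - 2*s*|βb j| + l0 := by
        rw [e]; field_simp; linear_combination hs
      rw [e2] at h'
      exact h'
    by_contra hlt
    push_neg at hlt
    have hmul : |cb| * |βb j| < (2*s + l1) * |βb j| := mul_lt_mul_of_pos_right hlt hu
    linarith [hopt, hcb, hmul, key2]
  -- conclude
  have hdiff : |(inner ℝ (x j) αb : ℝ) - (inner ℝ (x j) α : ℝ)| ≤ ‖x j‖ * r := by
    have e : (inner ℝ (x j) αb : ℝ) - (inner ℝ (x j) α : ℝ) = (inner ℝ (x j) (αb - α) : ℝ) :=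
      (inner_sub_right _ _ _).symm
    rw [e]
    calc |(inner ℝ (x j) (αb - α) : ℝ)| ≤ ‖x j‖ * ‖αb - α‖ := abs_real_inner_le_norm _ _
      _ ≤ ‖x j‖ * r := by
        refine mul_le_mul_of_nonneg_left ?_ (norm_nonneg _)
        rw [norm_sub_rev]; exact hle
  have habs := abs_sub_abs_le_abs_sub (inner ℝ (x j) αb : ℝ) (inner ℝ (x j) α : ℝ)
  linarith
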